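/- arXiv:2311.15225 — 3 statements merged into one kernel-verified Lean document; each statement's English description precedes it below -/
import Mathlib

section
/- For every integer C ≥ 2 there exists a threshold φ(C) ≤ 1/2 such that for every probability vector p = (p₁, …, p_C) (p_i ≥ 0, Σᵢ pᵢ = 1) and every index c, if p_c ≥ φ(C) then H₂(p_c) ≥ H(p) / log₂ C, where H₂ is the binary entropy in bits and H(p) is the Shannon entropy of p in bits. -/
/-- Binary entropy in bits: H₂(q) = −q·log₂ q − (1−q)·log₂(1−q), with 0·log₂ 0 = 0
(automatic since `Real.logb 2 0 = 0`). -/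
noncomputable def binEnt (q : ℝ) : ℝ :=
  -(q * Real.logb 2 q) - (1 - q) * Real.logb 2 (1 - q)

/-- Shannon entropy in bits of a probability vector over `Fin C`, with 0·log₂ 0 = 0. -/
noncomputable def shannonEnt {C : ℕ} (p : Fin C → ℝ) : ℝ :=
  -∑ i, p i * Real.logb 2 (p i)

section Aux

open Real Finset

-- grouping / Jensen bound
lemma grouping (C : ℕ) (hC : 2 ≤ C) (p : Fin C → ℝ) (hp : ∀ i, 0 ≤ p i)
    (hs : (∑ i, p i) = 1) (c : Fin C) :
    ∑ i, negMulLog (p i) ≤ binEntropy (p c) + (1 - p c) * Real.log ((C : ℝ) - 1) := by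
  have hn : (1 : ℝ) ≤ (C : ℝ) - 1 := by
    have : (2 : ℝ) ≤ (C : ℝ) := by exact_mod_cast hC
    linarith
  have hn0 : (0 : ℝ) < (C : ℝ) - 1 := by linarith
  have hcard : ((Finset.univ.erase c).card : ℝ) = (C : ℝ) - 1 := by
    rw [card_erase_of_mem (mem_univ c)]
    simp [Nat.cast_sub (by omega : 1 ≤ C)]
  have hsum : ∑ i ∈ Finset.univ.erase c, p i = 1 - p c := by
    have := Finset.add_sum_erase Finset.univ p (mem_univ c)
    rw [hs] at this; linarith
  have jensen := concaveOn_negMulLog.le_map_sum (t := Finset.univ.erase c)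
    (w := fun _ => ((C : ℝ) - 1)⁻¹) (p := p)
    (fun i _ => by positivity)
    (by rw [Finset.sum_const, nsmul_eq_mul, hcard, mul_inv_cancel₀ hn0.ne'])
    (fun i _ => hp i)
  have hsmul : ∑ i ∈ Finset.univ.erase c, ((C : ℝ) - 1)⁻¹ • p i
      = ((C : ℝ) - 1)⁻¹ * (1 - p c) := by
    simp only [smul_eq_mul, ← Finset.mul_sum, hsum]
  rw [hsmul] at jensen
  have key : ∑ i ∈ Finset.univ.erase c, negMulLog (p i)
      ≤ (1 - p c) * Real.log ((C : ℝ) - 1) + negMulLog (1 - p c) := by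
    have h2 : ∑ i ∈ Finset.univ.erase c, negMulLog (p i)
        = ((C : ℝ) - 1) * ∑ i ∈ Finset.univ.erase c, ((C : ℝ) - 1)⁻¹ • negMulLog (p i) := by
      rw [Finset.mul_sum]
      congr 1; ext i
      rw [smul_eq_mul, ← mul_assoc, mul_inv_cancel₀ hn0.ne', one_mul]
    rw [h2]
    have h3 : ((C : ℝ) - 1) * negMulLog (((C : ℝ) - 1)⁻¹ * (1 - p c))
        = (1 - p c) * Real.log ((C : ℝ) - 1) + negMulLog (1 - p c) := by
      rw [negMulLog_mul, mul_add]
      have h4 : negMulLog (((C : ℝ) - 1)⁻¹) = ((C : ℝ) - 1)⁻¹ * Real.log ((C : ℝ) - 1) := by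
        unfold negMulLog
        rw [Real.log_inv]; ring
      rw [h4]
      field_simp
    calc ((C : ℝ) - 1) * ∑ i ∈ Finset.univ.erase c, ((C : ℝ) - 1)⁻¹ • negMulLog (p i)
        ≤ ((C : ℝ) - 1) * negMulLog (((C : ℝ) - 1)⁻¹ * (1 - p c)) := by
          apply mul_le_mul_of_nonneg_left _ hn0.le
          simpa [mul_comm] using jensen
      _ = _ := h3
  have hsplit : ∑ i, negMulLog (p i)
      = negMulLog (p c) + ∑ i ∈ Finset.univ.erase c, negMulLog (p i) := by
    rw [← Finset.add_sum_erase Finset.univ _ (mem_univ c)]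
  rw [hsplit, binEntropy_eq_negMulLog_add_negMulLog_one_sub]
  linarith

lemma step2 (C : ℕ) (hC : 2 ≤ C) (q : ℝ) (hq : 1/2 ≤ q) (hq1 : q ≤ 1) :
    (1 - q) * Real.log ((C : ℝ) - 1)
      ≤ binEntropy q * ((Real.log C - Real.log 2) / Real.log 2) := by
  have hC2 : (2 : ℝ) ≤ (C : ℝ) := by exact_mod_cast hC
  have hlog2 : (0 : ℝ) < Real.log 2 := Real.log_pos (by norm_num)
  have hlogC : Real.log 2 ≤ Real.log C := Real.log_le_log (by norm_num) hC2
  set a : ℝ := (Real.log C - Real.log 2) / Real.log 2 with ha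
  have ha0 : 0 ≤ a := div_nonneg (by linarith) hlog2.le
  -- g q := a * binEntropy q + (log(C-1) * q - log(C-1)) is concave on [0,1]
  have hconc : ConcaveOn ℝ (Set.Icc (0:ℝ) 1)
      (fun x => a • binEntropy x + (Real.log ((C:ℝ)-1) * x - Real.log ((C:ℝ)-1))) := by
    apply ConcaveOn.add (strictConcave_binEntropy.concaveOn.smul ha0)
    have hln : (0:ℝ) ≤ Real.log ((C:ℝ)-1) := Real.log_nonneg (by linarith)
    have : ConcaveOn ℝ (Set.Icc (0:ℝ) 1) (fun x : ℝ => Real.log ((C:ℝ)-1) * x) := by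
      simpa [smul_eq_mul] using (concaveOn_id (convex_Icc (0:ℝ) 1)).smul hln
    exact this.sub (convexOn_const (Real.log ((C:ℝ)-1)) (convex_Icc (0:ℝ) 1))
  set g : ℝ → ℝ := fun x => a • binEntropy x + (Real.log ((C:ℝ)-1) * x - Real.log ((C:ℝ)-1))
  have hn1 : (1:ℝ) ≤ (C:ℝ) - 1 := by linarith
  have hghalf : 0 ≤ g (1/2) := by
    have hbe : binEntropy (1/2 : ℝ) = Real.log 2 := by
      rw [show (1/2 : ℝ) = 2⁻¹ by norm_num, binEntropy_two_inv]
    have key : Real.log ((C:ℝ)-1) ≤ 2 * (Real.log C - Real.log 2) := by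
      have h1 : ((C:ℝ)-1) * 4 ≤ (C:ℝ)^2 := by nlinarith
      have h2 : Real.log (((C:ℝ)-1) * 4) ≤ Real.log ((C:ℝ)^2) :=
        Real.log_le_log (by nlinarith) h1
      rw [Real.log_mul (by linarith) (by norm_num), Real.log_pow,
        show (4:ℝ) = 2^2 by norm_num, Real.log_pow] at h2
      push_cast at h2
      linarith
    simp only [g, smul_eq_mul, hbe]
    have : a * Real.log 2 = Real.log C - Real.log 2 := by
      rw [ha, div_mul_cancel₀ _ hlog2.ne']
    rw [this]
    linarith
  have hg1 : g 1 = 0 := by simp [g, binEntropy_one]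
  have hgq : 0 ≤ g q := by
    have hcomb := hconc.2 (x := 1/2) (y := 1) (Set.mem_Icc.mpr ⟨by norm_num, by norm_num⟩)
      (Set.mem_Icc.mpr ⟨by norm_num, le_refl 1⟩)
      (show (0:ℝ) ≤ 2*(1-q) by linarith) (show (0:ℝ) ≤ 2*q-1 by linarith)
      (show 2*(1-q)+(2*q-1) = 1 by ring)
    have : (2*(1-q)) • ((1:ℝ)/2) + (2*q-1) • (1:ℝ) = q := by
      simp [smul_eq_mul]; ring
    rw [this] at hcomb
    have h1 : 0 ≤ (2*(1-q)) • g (1/2) := by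
      rw [smul_eq_mul]; apply mul_nonneg (by linarith) hghalf
    rw [hg1] at hcomb
    simp only [smul_eq_mul, mul_zero, add_zero] at hcomb h1
    exact le_trans h1 hcomb
  simp only [g, smul_eq_mul] at hgq
  nlinarith [hgq]

end Aux

/-- For every integer C ≥ 2 there exists a threshold φ(C) ≤ 1/2 such that for every
probability vector p over C classes and every index c, if p_c ≥ φ(C) then
H₂(p_c) ≥ H(p) / log₂ C. -/
theorem stmt_0 (C : ℕ) (hC : 2 ≤ C) :
    ∃ φ : ℝ, φ ≤ 1 / 2 ∧
      ∀ (p : Fin C → ℝ), (∀ i, 0 ≤ p i) → (∑ i, p i) = 1 →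
        ∀ c : Fin C, φ ≤ p c →
          shannonEnt p / Real.logb 2 (C : ℝ) ≤ binEnt (p c) := by
  refine ⟨1/2, le_refl _, fun p hp hs c hφ => ?_⟩
  have hlog2 : (0 : ℝ) < Real.log 2 := Real.log_pos (by norm_num)
  have hC2 : (2 : ℝ) ≤ (C : ℝ) := by exact_mod_cast hC
  have hlogC : (0 : ℝ) < Real.log C := Real.log_pos (by linarith)
  have hq1 : p c ≤ 1 := by
    rw [← hs]
    exact Finset.single_le_sum (fun i _ => hp i) (Finset.mem_univ c)
  have hbe : binEnt (p c) = Real.binEntropy (p c) / Real.log 2 := by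
    simp only [binEnt, Real.binEntropy, Real.logb, Real.log_inv]
    ring
  have hse : shannonEnt p = (∑ i, Real.negMulLog (p i)) / Real.log 2 := by
    simp only [shannonEnt, Real.logb, Real.negMulLog_def]
    rw [Finset.sum_div, ← Finset.sum_neg_distrib]
    congr 1; ext i; ring
  have h1 := grouping C hC p hp hs c
  have h2 := step2 C hC (p c) hφ hq1
  rw [hbe, hse, Real.logb]
  rw [show (∑ i, Real.negMulLog (p i)) / Real.log 2 / (Real.log C / Real.log 2)
      = (∑ i, Real.negMulLog (p i)) / Real.log C by field_simp]
  rw [div_le_div_iff₀ hlogC hlog2]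
  have h3 : (∑ i, Real.negMulLog (p i)) ≤ Real.binEntropy (p c) * (Real.log C / Real.log 2) := by
    have : Real.binEntropy (p c) + Real.binEntropy (p c) * ((Real.log C - Real.log 2) / Real.log 2)
        = Real.binEntropy (p c) * (Real.log C / Real.log 2) := by
      field_simp; ring
    linarith
  calc (∑ i, Real.negMulLog (p i)) * Real.log 2
      ≤ Real.binEntropy (p c) * (Real.log C / Real.log 2) * Real.log 2 := by
        exact mul_le_mul_of_nonneg_right h3 hlog2.le
    _ = Real.binEntropy (p c) * Real.log C := by field_simp
end

section
/- For every integer C ≥ 2, every probability vector p = (p₁, …, p_C) (p_i ≥ 0, Σᵢ pᵢ = 1), and every index c with p_c ≥ 1/2, one has H₂(p_c) ≥ H(p) / log₂ C, where H₂ is the binary entropy in bits and H(p) is the Shannon entropy of p in bits. -/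
open Real Finset

lemma binEnt_eq (q : ℝ) : binEnt q = Real.binEntropy q / Real.log 2 := by
  rw [binEnt, Real.binEntropy_eq_negMulLog_add_negMulLog_one_sub, Real.negMulLog,
    Real.negMulLog, Real.logb, Real.logb]
  ring

/-- chord bound: for 1/2 ≤ q ≤ 1, 2(1-q)·log 2 ≤ binEntropy q -/
lemma chord_bound {q : ℝ} (h1 : 1/2 ≤ q) (h2 : q ≤ 1) :
    2 * (1 - q) * Real.log 2 ≤ Real.binEntropy q := by
  have hcc := Real.strictConcave_binEntropy.concaveOn
  have hx : (2⁻¹ : ℝ) ∈ Set.Icc (0:ℝ) 1 := by norm_num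
  have hy : (1 : ℝ) ∈ Set.Icc (0:ℝ) 1 := by norm_num
  have ha : (0:ℝ) ≤ 2 * (1 - q) := by linarith
  have hb : (0:ℝ) ≤ 2 * q - 1 := by linarith
  have hab : 2 * (1 - q) + (2 * q - 1) = 1 := by ring
  have := hcc.2 hx hy ha hb hab
  rw [Real.binEntropy_two_inv, Real.binEntropy_one] at this
  simp only [smul_eq_mul] at this
  have hq : 2 * (1 - q) * 2⁻¹ + (2 * q - 1) * 1 = q := by ring
  rw [hq] at this
  linarith

/-- For every integer C ≥ 2, every probability vector p over C classes, and every index c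
with p_c ≥ 1/2, one has H₂(p_c) ≥ H(p) / log₂ C. -/
theorem stmt_1 (C : ℕ) (hC : 2 ≤ C) (p : Fin C → ℝ)
    (hp0 : ∀ i, 0 ≤ p i) (hp1 : (∑ i, p i) = 1) (c : Fin C) (hc : 1 / 2 ≤ p c) :
    shannonEnt p / Real.logb 2 (C : ℝ) ≤ binEnt (p c) := by
  have hlog2 : (0:ℝ) < Real.log 2 := Real.log_pos (by norm_num)
  have hC1 : (1:ℝ) ≤ (C:ℝ) - 1 := by
    have : (2:ℝ) ≤ (C:ℝ) := by exact_mod_cast hC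
    linarith
  have hCpos : (0:ℝ) < (C:ℝ) - 1 := by linarith
  set q := p c with hq
  have hq1 : q ≤ 1 := by
    rw [← hp1]
    exact Finset.single_le_sum (fun i _ => hp0 i) (mem_univ c)
  set t := Finset.univ.erase c with ht
  have hcard : (t.card : ℝ) = (C:ℝ) - 1 := by
    rw [ht, Finset.card_erase_of_mem (mem_univ c)]
    simp only [Finset.card_univ, Fintype.card_fin]
    have : 1 ≤ C := by omega
    push_cast [Nat.cast_sub this]
    ring
  set s := ∑ i ∈ t, p i with hs
  have hsplit : q + s = 1 := by
    rw [hs, ht, Finset.add_sum_erase _ p (mem_univ c), hp1]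
  have hs_eq : s = 1 - q := by linarith
  have hs0 : 0 ≤ s := Finset.sum_nonneg fun i _ => hp0 i
  -- Jensen's inequality on the erased set
  have hjensen : ∑ i ∈ t, Real.negMulLog (p i) ≤
      ((C:ℝ) - 1) * Real.negMulLog (s / ((C:ℝ) - 1)) := by
    have hw : ∀ i ∈ t, (0:ℝ) ≤ ((C:ℝ) - 1)⁻¹ := fun i _ => by positivity
    have hw1 : ∑ i ∈ t, ((C:ℝ) - 1)⁻¹ = 1 := by
      rw [Finset.sum_const, nsmul_eq_mul, hcard, mul_inv_cancel₀ (ne_of_gt hCpos)]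
    have hmem : ∀ i ∈ t, p i ∈ Set.Ici (0:ℝ) := fun i _ => hp0 i
    have := Real.concaveOn_negMulLog.le_map_sum hw hw1 hmem
    simp only [smul_eq_mul] at this
    have hsum : ∑ i ∈ t, ((C:ℝ) - 1)⁻¹ * p i = s / ((C:ℝ) - 1) := by
      rw [← Finset.mul_sum, ← hs, div_eq_inv_mul]
    rw [hsum] at this
    calc ∑ i ∈ t, Real.negMulLog (p i)
        = ((C:ℝ) - 1) * ∑ i ∈ t, ((C:ℝ) - 1)⁻¹ * Real.negMulLog (p i) := by
          rw [← Finset.mul_sum, ← mul_assoc, mul_inv_cancel₀ (ne_of_gt hCpos), one_mul]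
      _ ≤ ((C:ℝ) - 1) * Real.negMulLog (s / ((C:ℝ) - 1)) := by
          apply mul_le_mul_of_nonneg_left this (le_of_lt hCpos)
  have hexpand : ((C:ℝ) - 1) * Real.negMulLog (s / ((C:ℝ) - 1)) =
      s * Real.log ((C:ℝ) - 1) + Real.negMulLog s := by
    rcases eq_or_ne s 0 with h0 | h0
    · simp [h0]
    · rw [Real.negMulLog, Real.negMulLog,
        Real.log_div h0 (ne_of_gt hCpos)]
      field_simp
      ring
  -- main bound in natural log
  have hH : ∑ i, Real.negMulLog (p i) ≤ Real.binEntropy q + s * Real.log ((C:ℝ) - 1) := by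
    have hsplit2 : ∑ i, Real.negMulLog (p i)
        = Real.negMulLog q + ∑ i ∈ t, Real.negMulLog (p i) := by
      rw [ht, Finset.add_sum_erase _ (fun i => Real.negMulLog (p i)) (mem_univ c)]
    rw [hsplit2, Real.binEntropy_eq_negMulLog_add_negMulLog_one_sub, ← hs_eq]
    have := hjensen.trans_eq hexpand
    linarith
  -- bound s * log(C-1) ≤ binEntropy q * (log C / log 2 - 1)
  have hbe : 2 * s * Real.log 2 ≤ Real.binEntropy q := by
    rw [hs_eq]; exact chord_bound hc hq1
  have hlogC : Real.log ((C:ℝ) - 1) ≤ 2 * Real.log (C:ℝ) - 2 * Real.log 2 := by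
    have h4 : 4 * ((C:ℝ) - 1) ≤ (C:ℝ)^2 := by nlinarith
    have hl : Real.log ((C:ℝ) - 1) ≤ Real.log ((C:ℝ)^2 / 4) := by
      apply Real.log_le_log hCpos
      rw [le_div_iff₀ (by norm_num : (0:ℝ) < 4)]
      linarith
    have : Real.log ((C:ℝ)^2 / 4) = 2 * Real.log (C:ℝ) - 2 * Real.log 2 := by
      rw [Real.log_div (by positivity) (by norm_num), Real.log_pow]
      have : Real.log 4 = 2 * Real.log 2 := by
        rw [show (4:ℝ) = 2^2 by norm_num, Real.log_pow]; push_cast; ring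
      rw [this]; push_cast; ring
    linarith
  have hbpos : 0 ≤ Real.binEntropy q := Real.binEntropy_nonneg (by linarith) hq1
  have hClog : Real.log 2 ≤ Real.log (C:ℝ) := by
    apply Real.log_le_log (by norm_num)
    exact_mod_cast hC
  have hkey : ∑ i, Real.negMulLog (p i) ≤
      Real.binEntropy q * (Real.log (C:ℝ) / Real.log 2) := by
    have h1 : s * Real.log ((C:ℝ) - 1) ≤ 2 * s * (Real.log (C:ℝ) - Real.log 2) := by
      have := mul_le_mul_of_nonneg_left hlogC hs0
      nlinarith
    have h2 : 2 * s * (Real.log (C:ℝ) - Real.log 2) ≤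
        Real.binEntropy q * (Real.log (C:ℝ) / Real.log 2 - 1) := by
      have hfac : 0 ≤ Real.log (C:ℝ) / Real.log 2 - 1 := by
        rw [sub_nonneg, le_div_iff₀ hlog2]; linarith
      have e1 : 2 * s * (Real.log (C:ℝ) - Real.log 2)
          = (2 * s * Real.log 2) * (Real.log (C:ℝ) / Real.log 2 - 1) := by
        field_simp
      rw [e1]
      exact mul_le_mul_of_nonneg_right hbe hfac
    have := hH.trans (by linarith : Real.binEntropy q + s * Real.log ((C:ℝ) - 1) ≤
      Real.binEntropy q * (Real.log (C:ℝ) / Real.log 2))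
    exact this
  -- conclude
  have hSE : shannonEnt p = (∑ i, Real.negMulLog (p i)) / Real.log 2 := by
    have hpt : ∀ i : Fin C, p i * Real.logb 2 (p i) = -(Real.negMulLog (p i) / Real.log 2) := by
      intro i; rw [Real.negMulLog, Real.logb]; field_simp
    rw [shannonEnt]
    simp only [hpt, Finset.sum_neg_distrib, neg_neg, Finset.sum_div]
  have hlogbC : Real.logb 2 (C:ℝ) = Real.log (C:ℝ) / Real.log 2 := rfl
  have hlogbCpos : 0 < Real.logb 2 (C:ℝ) := by
    rw [hlogbC]
    exact div_pos (Real.log_pos (by exact_mod_cast (by omega : 1 < C))) hlog2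
  rw [div_le_iff₀ hlogbCpos, binEnt_eq, hSE, hlogbC, div_mul_eq_mul_div]
  gcongr
end

section
/- Fix an integer C ≥ 2 and an index c. Let (p⁽ⁿ⁾)ₙ be a sequence of probability vectors over C classes (p⁽ⁿ⁾ᵢ ≥ 0, Σᵢ p⁽ⁿ⁾ᵢ = 1) such that 0 < p⁽ⁿ⁾_c < 1 for all n and p⁽ⁿ⁾_c → 1 as n → ∞. Then H₂(p⁽ⁿ⁾_c)/H(p⁽ⁿ⁾) → 1 as n → ∞, where H₂ is the binary entropy in bits and H is the Shannon entropy in bits. -/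
open Finset Filter Real

lemma ent_diff_eq (C : ℕ) (c : Fin C) (f : Fin C → ℝ) :
    shannonEnt f - binEnt (f c)
      = (∑ i ∈ Finset.univ.erase c, -(f i * Real.log (f i))
          + (1 - f c) * Real.log (1 - f c)) / Real.log 2 := by
  have hL : Real.log 2 ≠ 0 := ne_of_gt (Real.log_pos (by norm_num))
  have hsplit : ∑ i, f i * Real.logb 2 (f i)
      = f c * Real.logb 2 (f c) + ∑ i ∈ Finset.univ.erase c, f i * Real.logb 2 (f i) :=
    (Finset.add_sum_erase _ _ (Finset.mem_univ c)).symm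
  have h1 : ∑ i ∈ Finset.univ.erase c, f i * Real.logb 2 (f i)
      = (∑ i ∈ Finset.univ.erase c, f i * Real.log (f i)) / Real.log 2 := by
    rw [Finset.sum_div]
    exact Finset.sum_congr rfl fun i _ => by rw [Real.logb, mul_div_assoc]
  have h2 : ∑ i ∈ Finset.univ.erase c, -(f i * Real.log (f i))
      = -(∑ i ∈ Finset.univ.erase c, f i * Real.log (f i)) := by
    rw [Finset.sum_neg_distrib]
  rw [shannonEnt, binEnt, hsplit, h1, h2, Real.logb, Real.logb]
  field_simp
  ring

/-- Core inequalities in natural log. -/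
lemma core_bounds (C : ℕ) (hC : 2 ≤ C) (c : Fin C) (f : Fin C → ℝ)
    (h0 : ∀ i, 0 ≤ f i) (h1 : ∑ i, f i = 1) (hq1 : f c < 1) :
    0 ≤ ∑ i ∈ Finset.univ.erase c, -(f i * Real.log (f i))
        + (1 - f c) * Real.log (1 - f c) ∧
    ∑ i ∈ Finset.univ.erase c, -(f i * Real.log (f i))
        + (1 - f c) * Real.log (1 - f c) ≤ (1 - f c) * Real.log ((C : ℝ) - 1) := by
  set s : ℝ := 1 - f c with hs_def
  have hs : 0 < s := by simp [hs_def]; linarith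
  have hsumE : ∑ i ∈ Finset.univ.erase c, f i = s := by
    rw [Finset.sum_erase_eq_sub (Finset.mem_univ c), h1]
  have hfle : ∀ i ∈ Finset.univ.erase c, f i ≤ s := by
    intro i hi
    rw [← hsumE]
    exact Finset.single_le_sum (fun j _ => h0 j) hi
  have hC1 : (1 : ℝ) ≤ (C : ℝ) - 1 := by
    have : (2 : ℝ) ≤ (C : ℝ) := by exact_mod_cast hC
    linarith
  have hcard : (Finset.univ.erase c).card = C - 1 := by
    rw [Finset.card_erase_of_mem (Finset.mem_univ c)]
    simp
  constructor
  · -- lower bound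
    have key : ∑ i ∈ Finset.univ.erase c, -(f i * Real.log s)
        ≤ ∑ i ∈ Finset.univ.erase c, -(f i * Real.log (f i)) := by
      apply Finset.sum_le_sum
      intro i hi
      rcases (h0 i).eq_or_lt with h | h
      · simp [← h]
      · have := Real.log_le_log h (hfle i hi)
        nlinarith
    have : ∑ i ∈ Finset.univ.erase c, -(f i * Real.log s) = -(s * Real.log s) := by
      rw [Finset.sum_neg_distrib, ← Finset.sum_mul, hsumE]
    linarith [key, this.symm ▸ key]
  · -- upper bound
    have key : ∀ i ∈ Finset.univ.erase c,
        f i * Real.log s - f i * Real.log (f i)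
          ≤ f i * Real.log ((C : ℝ) - 1) + (s / ((C : ℝ) - 1) - f i) := by
      intro i _
      rcases (h0 i).eq_or_lt with h | h
      · rw [← h]
        have : 0 ≤ s / ((C : ℝ) - 1) := by positivity
        simpa using this
      · have hpos : 0 < s / (f i * ((C : ℝ) - 1)) := by positivity
        have hlog := Real.log_le_sub_one_of_pos hpos
        have heq : Real.log (s / (f i * ((C : ℝ) - 1)))
            = Real.log s - Real.log (f i) - Real.log ((C : ℝ) - 1) := by
          rw [Real.log_div (ne_of_gt hs) (by positivity),
            Real.log_mul (ne_of_gt h) (by linarith), sub_sub]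
        rw [heq] at hlog
        have h3 := mul_le_mul_of_nonneg_left hlog (h0 i)
        have h4 : f i * (s / (f i * ((C : ℝ) - 1)) - 1) = s / ((C : ℝ) - 1) - f i := by
          field_simp
        nlinarith
    have hsum := Finset.sum_le_sum key
    have hrhs : ∑ i ∈ Finset.univ.erase c,
        (f i * Real.log ((C : ℝ) - 1) + (s / ((C : ℝ) - 1) - f i))
        = s * Real.log ((C : ℝ) - 1) := by
      rw [Finset.sum_add_distrib, ← Finset.sum_mul, hsumE, Finset.sum_sub_distrib,
        Finset.sum_const, hsumE, hcard, nsmul_eq_mul]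
      have hcast : ((C - 1 : ℕ) : ℝ) = (C : ℝ) - 1 := by
        have : 1 ≤ C := by omega
        push_cast [this]
        ring
      rw [hcast]
      field_simp
      ring
    have hlhs : ∑ i ∈ Finset.univ.erase c,
        (f i * Real.log s - f i * Real.log (f i))
        = s * Real.log s + ∑ i ∈ Finset.univ.erase c, -(f i * Real.log (f i)) := by
      rw [Finset.sum_sub_distrib, ← Finset.sum_mul, hsumE, Finset.sum_neg_distrib]
      ring
    rw [hrhs, hlhs] at hsum
    linarith

/-- If p⁽ⁿ⁾ are probability vectors over C ≥ 2 classes with 0 < p⁽ⁿ⁾_c < 1 and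
p⁽ⁿ⁾_c → 1, then H₂(p⁽ⁿ⁾_c)/H(p⁽ⁿ⁾) → 1. -/
theorem stmt_13 (C : ℕ) (hC : 2 ≤ C) (c : Fin C) (p : ℕ → Fin C → ℝ)
    (hp0 : ∀ n i, 0 ≤ p n i) (hp1 : ∀ n, (∑ i, p n i) = 1)
    (hc : ∀ n, 0 < p n c ∧ p n c < 1)
    (hlim : Filter.Tendsto (fun n => p n c) Filter.atTop (nhds 1)) :
    Filter.Tendsto (fun n => binEnt (p n c) / shannonEnt (p n))
      Filter.atTop (nhds 1) := by
  have hL : (0 : ℝ) < Real.log 2 := Real.log_pos (by norm_num)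
  -- basic positivity facts for each n
  have hs : ∀ n, 0 < 1 - p n c := fun n => by linarith [(hc n).2]
  have hA : ∀ n, (1 - p n c) * (-(Real.logb 2 (1 - p n c))) ≤ binEnt (p n c) := by
    intro n
    have hq : Real.logb 2 (p n c) ≤ 0 :=
      Real.logb_nonpos (by norm_num) (le_of_lt (hc n).1) (le_of_lt (hc n).2)
    have : 0 ≤ -(p n c * Real.logb 2 (p n c)) := by nlinarith [(hc n).1]
    rw [binEnt]
    nlinarith
  have hApos : ∀ n, 0 < binEnt (p n c) := by
    intro n
    have h1 : 0 < -(Real.logb 2 (1 - p n c)) := by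
      have := Real.logb_neg (show (1:ℝ) < 2 by norm_num) (hs n)
        (by linarith [(hc n).1])
      linarith
    have := hA n
    nlinarith [hs n]
  -- bound the relative difference
  have hD0 : ∀ n, 0 ≤ shannonEnt (p n) - binEnt (p n c) := by
    intro n
    rw [ent_diff_eq C c (p n)]
    exact div_nonneg (core_bounds C hC c (p n) (hp0 n) (hp1 n) (hc n).2).1 (le_of_lt hL)
  have hDle : ∀ n, shannonEnt (p n) - binEnt (p n c)
      ≤ (1 - p n c) * (Real.log ((C : ℝ) - 1) / Real.log 2) := by
    intro n
    rw [ent_diff_eq C c (p n)]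
    have := (core_bounds C hC c (p n) (hp0 n) (hp1 n) (hc n).2).2
    rw [div_le_iff₀ hL]
    have hexp : (1 - p n c) * (Real.log ((C : ℝ) - 1) / Real.log 2) * Real.log 2
        = (1 - p n c) * Real.log ((C : ℝ) - 1) := by
      field_simp
    rw [hexp]
    exact this
  have hC1 : (1 : ℝ) ≤ (C : ℝ) - 1 := by
    have : (2 : ℝ) ≤ (C : ℝ) := by exact_mod_cast hC
    linarith
  have hlogC1 : 0 ≤ Real.log ((C : ℝ) - 1) := Real.log_nonneg hC1
  -- relative difference
  set DA : ℕ → ℝ := fun n => (shannonEnt (p n) - binEnt (p n c)) / binEnt (p n c) with hDA_def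
  have hDA0 : ∀ n, 0 ≤ DA n := fun n => div_nonneg (hD0 n) (le_of_lt (hApos n))
  have hDAle : ∀ n, DA n ≤ Real.log ((C : ℝ) - 1) / (-Real.log (1 - p n c)) := by
    intro n
    have hlogs : 0 < -(Real.logb 2 (1 - p n c)) := by
      have := Real.logb_neg (show (1:ℝ) < 2 by norm_num) (hs n) (by linarith [(hc n).1])
      linarith
    have hdenpos : 0 < (1 - p n c) * (-(Real.logb 2 (1 - p n c))) := by
      have := hs n; positivity
    have step1 : DA n ≤ ((1 - p n c) * (Real.log ((C:ℝ)-1) / Real.log 2))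
        / ((1 - p n c) * (-(Real.logb 2 (1 - p n c)))) := by
      exact div_le_div₀ (mul_nonneg (le_of_lt (hs n)) (div_nonneg (Real.log_nonneg hC1) hL.le)) (hDle n) hdenpos (hA n)
    have step2 : ((1 - p n c) * (Real.log ((C:ℝ)-1) / Real.log 2))
        / ((1 - p n c) * (-(Real.logb 2 (1 - p n c))))
        = Real.log ((C:ℝ)-1) / (-Real.log (1 - p n c)) := by
      rw [mul_div_mul_left _ _ (ne_of_gt (hs n)), Real.logb, ← neg_div,
        div_div_div_comm, div_self (ne_of_gt hL), div_one]
    rw [step2] at step1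
    exact step1
  -- the upper bound tends to 0
  have hs0 : Filter.Tendsto (fun n => 1 - p n c) Filter.atTop (nhds 0) := by
    have h1 : Filter.Tendsto (fun _ : ℕ => (1:ℝ)) Filter.atTop (nhds 1) := tendsto_const_nhds
    simpa using h1.sub hlim
  have hlogbot : Filter.Tendsto (fun n => Real.log (1 - p n c)) Filter.atTop Filter.atBot := by
    apply Real.tendsto_log_nhdsNE_zero.comp
    apply tendsto_nhdsWithin_of_tendsto_nhds_of_eventually_within _ hs0
    exact Filter.Eventually.of_forall fun n => by
      simpa using ne_of_gt (hs n)
  have hnegtop : Filter.Tendsto (fun n => -Real.log (1 - p n c)) Filter.atTop Filter.atTop :=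
    tendsto_neg_atBot_atTop.comp hlogbot
  have hU : Filter.Tendsto (fun n => Real.log ((C : ℝ) - 1) / (-Real.log (1 - p n c)))
      Filter.atTop (nhds 0) :=
    Filter.Tendsto.div_atTop tendsto_const_nhds hnegtop
  have hDAlim : Filter.Tendsto DA Filter.atTop (nhds 0) :=
    tendsto_of_tendsto_of_tendsto_of_le_of_le tendsto_const_nhds hU hDA0 hDAle
  -- conclude
  have hBA : Filter.Tendsto (fun n => shannonEnt (p n) / binEnt (p n c))
      Filter.atTop (nhds 1) := by
    have heq : ∀ n, shannonEnt (p n) / binEnt (p n c) = 1 + DA n := by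
      intro n
      rw [hDA_def]
      field_simp [ne_of_gt (hApos n)]
      ring
    have h1 : Filter.Tendsto (fun _ : ℕ => (1:ℝ)) Filter.atTop (nhds 1) := tendsto_const_nhds
    have h2 := h1.add hDAlim
    simp only [add_zero] at h2
    exact h2.congr fun n => (heq n).symm
  have := hBA.inv₀ one_ne_zero
  simp only [inv_one] at this
  refine this.congr fun n => ?_
  rw [inv_div]
end
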